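/- For a nonnegative integer matrix A, the set X_A defined using nonnegative integer exponent vectors u,v with Au = Av coincides with the set Z_A defined analogously but allowing nonnegative real exponent vectors u,v with Au = Av. That is, if x ∈ ℝ_{≥0}^m satisfies x^u = x^v for all nonnegative integer u,v in the kernel relation Au = Av, then x^u = x^v holds for all nonnegative real u,v with Au = Av. -/

import Mathlib

/-- Any real solution of a rational linear system is a real linear combination of
rational solutions. -/
lemma rational_kernel_decomp {ι : Type*} [Fintype ι] {m : ℕ} (M : ι → Fin m → ℚ)
    (w : Fin m → ℝ) (hw : ∀ i, ∑ j, (M i j : ℝ) * w j = 0) :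
    ∃ (n : ℕ) (q : Fin n → Fin m → ℚ) (r : Fin n → ℝ),
      (∀ t i, ∑ j, M i j * q t j = 0) ∧ (∀ j, w j = ∑ t, r t * (q t j : ℝ)) := by
  set W : Submodule ℚ ℝ := Submodule.span ℚ (Set.range w) with hW
  have hfin : FiniteDimensional ℚ W := by
    apply FiniteDimensional.span_of_finite
    exact Set.finite_range w
  let b := Module.finBasis ℚ W
  set n := Module.finrank ℚ W
  have hmem : ∀ j, w j ∈ W := fun j => Submodule.subset_span (Set.mem_range_self j)
  let wW : Fin m → W := fun j => ⟨w j, hmem j⟩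
  refine ⟨n, fun t j => b.repr (wW j) t, fun t => (b t : ℝ), ?_, ?_⟩
  · intro t i
    have key : (∑ j, M i j • wW j) = 0 := by
      apply Subtype.ext
      push_cast [Submodule.coe_smul]
      simpa [Rat.smul_def] using hw i
    have := congrArg (fun z => b.repr z t) key
    simpa [map_sum, Finsupp.smul_apply] using this
  · intro j
    have := b.sum_repr (wW j)
    have := congrArg (Subtype.val) this
    push_cast [Submodule.coe_smul] at this
    change _ = w j at this
    rw [← this]
    exact Finset.sum_congr rfl fun t _ => by rw [Rat.smul_def]; ring

/-- Clearing denominators of a rational vector. -/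
lemma rat_clear {m : ℕ} (q : Fin m → ℚ) :
    ∃ (N : ℕ) (c : Fin m → ℤ), 0 < N ∧ ∀ j, (c j : ℚ) = (N : ℚ) * q j := by
  set N : ℕ := ∏ j, (q j).den with hN
  have hdvd : ∀ j, (q j).den ∣ N := fun j => Finset.dvd_prod_of_mem _ (Finset.mem_univ j)
  refine ⟨N, fun j => ((N / (q j).den : ℕ) : ℤ) * (q j).num,
    Finset.prod_pos (fun j _ => (q j).pos), ?_⟩
  intro j
  obtain ⟨k, hk⟩ := hdvd j
  have hpos := (q j).pos
  have hdiv : N / (q j).den = k := by rw [hk, Nat.mul_div_cancel_left _ hpos]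
  have hnum : ((q j).den : ℚ) * q j = (q j).num := by
    rw [mul_comm]; exact_mod_cast Rat.mul_den_eq_num (q j)
  simp only [hdiv]
  have hk' : (N : ℚ) = ((q j).den : ℚ) * k := by exact_mod_cast congrArg (Nat.cast : ℕ → ℚ) hk
  rw [hk']
  push_cast
  rw [← hnum]; ring

/-- A product of rpow's with exponents vanishing where the base vanishes, as an exponential. -/
lemma prod_rpow_eq_exp {m : ℕ} (x : Fin m → ℝ) (hx : ∀ j, 0 ≤ x j)
    (u : Fin m → ℝ) (hu : ∀ j, x j = 0 → u j = 0) :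
    ∏ j, x j ^ u j = Real.exp (∑ j, u j * Real.log (x j)) := by
  rw [Real.exp_sum]
  refine Finset.prod_congr rfl fun j _ => ?_
  rcases eq_or_lt_of_le (hx j) with h | h
  · rw [hu j h.symm, ← h, Real.rpow_zero, zero_mul, Real.exp_zero]
  · rw [Real.rpow_def_of_pos h, mul_comm]

/-- From a rational kernel vector of `A`, produce a pair of nonnegative integer vectors
`u', v'` with `A u' = A v'` whose difference is a positive multiple of the rational vector. -/
lemma int_pair_of_rat {d m : ℕ} (A : Matrix (Fin d) (Fin m) ℕ) (q : Fin m → ℚ)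
    (hq : ∀ i, ∑ j, (A i j : ℚ) * q j = 0) :
    ∃ (N : ℕ) (u' v' : Fin m → ℕ), 0 < N ∧
      (∀ i, ∑ j, A i j * u' j = ∑ j, A i j * v' j) ∧
      (∀ j, ((u' j : ℝ) - (v' j : ℝ)) = (N : ℝ) * (q j : ℝ)) ∧
      (∀ j, 0 < q j → 0 < u' j) ∧ (∀ j, q j = 0 → u' j = 0 ∧ v' j = 0) ∧
      (∀ j, 0 ≤ q j → v' j = 0) := by
  obtain ⟨N, c, hN, hc⟩ := rat_clear q
  refine ⟨N, fun j => (c j).toNat, fun j => (-c j).toNat, hN, ?_, ?_, ?_, ?_, ?_⟩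
  · intro i
    have hz : ∑ j, (A i j : ℤ) * c j = 0 := by
      have : ((∑ j, (A i j : ℤ) * c j : ℤ) : ℚ) = (N : ℚ) * ∑ j, (A i j : ℚ) * q j := by
        push_cast
        rw [Finset.mul_sum]
        exact Finset.sum_congr rfl fun j _ => by rw [hc j]; ring
      rw [hq i, mul_zero] at this
      exact_mod_cast this
    have : ((∑ j, A i j * (c j).toNat : ℕ) : ℤ) = ((∑ j, A i j * (-c j).toNat : ℕ) : ℤ) := by
      push_cast
      rw [← sub_eq_zero, ← Finset.sum_sub_distrib, ← hz]
      refine Finset.sum_congr rfl fun j _ => ?_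
      rw [← mul_sub, Int.toNat_sub_toNat_neg]
    exact_mod_cast this
  · intro j
    have h1 : ((c j : ℤ) : ℝ) = (N : ℝ) * (q j : ℝ) := by
      have := hc j; exact_mod_cast congrArg (Rat.cast : ℚ → ℝ) this
    rw [← h1, ← Int.toNat_sub_toNat_neg (c j)]
    push_cast
    ring
  · intro j hj
    have : 0 < c j := by
      have : (0 : ℚ) < (c j : ℚ) := by rw [hc j]; positivity
      exact_mod_cast this
    simpa using this
  · intro j hj
    have : c j = 0 := by
      have : (c j : ℚ) = 0 := by rw [hc j, hj, mul_zero]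
      exact_mod_cast this
    simp [this]
  · intro j hj
    have : 0 ≤ c j := by
      have : (0:ℚ) ≤ (c j : ℚ) := by rw [hc j]; positivity
      exact_mod_cast this
    simp [Int.toNat_eq_zero, this]

/-- The log vector of `x` is orthogonal to every rational kernel vector of `A` supported
on the coordinates where `x` is positive. -/
lemma log_orth {d m : ℕ} (A : Matrix (Fin d) (Fin m) ℕ)
    (x : Fin m → ℝ) (hx : ∀ j, 0 ≤ x j)
    (hX : ∀ u v : Fin m → ℕ, (∀ i, ∑ j, A i j * u j = ∑ j, A i j * v j) →
      ∏ j, x j ^ u j = ∏ j, x j ^ v j)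
    (q : Fin m → ℚ) (hq : ∀ i, ∑ j, (A i j : ℚ) * q j = 0)
    (hqz : ∀ j, x j = 0 → q j = 0) :
    ∑ j, (q j : ℝ) * Real.log (x j) = 0 := by
  obtain ⟨N, u', v', hN, hA, hsub, _, hzero, _⟩ := int_pair_of_rat A q hq
  have hprod := hX u' v' hA
  have h1 : ∏ j, x j ^ (u' j) = Real.exp (∑ j, (u' j : ℝ) * Real.log (x j)) := by
    rw [← prod_rpow_eq_exp x hx _ (fun j hj => by
      exact_mod_cast congrArg (Nat.cast : ℕ → ℝ) ((hzero j (hqz j hj)).1))]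
    exact Finset.prod_congr rfl fun j _ => (Real.rpow_natCast _ _).symm
  have h2 : ∏ j, x j ^ (v' j) = Real.exp (∑ j, (v' j : ℝ) * Real.log (x j)) := by
    rw [← prod_rpow_eq_exp x hx _ (fun j hj => by
      exact_mod_cast congrArg (Nat.cast : ℕ → ℝ) ((hzero j (hqz j hj)).2))]
    exact Finset.prod_congr rfl fun j _ => (Real.rpow_natCast _ _).symm
  rw [h1, h2, Real.exp_eq_exp] at hprod
  have key : ∑ j, ((N : ℝ) * (q j : ℝ)) * Real.log (x j) = 0 := by
    calc ∑ j, ((N : ℝ) * (q j : ℝ)) * Real.log (x j)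
        = ∑ j, ((u' j : ℝ) - (v' j : ℝ)) * Real.log (x j) := by
          exact Finset.sum_congr rfl fun j _ => by rw [hsub j]
      _ = (∑ j, (u' j : ℝ) * Real.log (x j)) - ∑ j, (v' j : ℝ) * Real.log (x j) := by
          rw [← Finset.sum_sub_distrib]; exact Finset.sum_congr rfl fun j _ => by ring
      _ = 0 := by rw [hprod, sub_self]
  have hN' : (N : ℝ) ≠ 0 := Nat.cast_ne_zero.mpr hN.ne'
  have : (N : ℝ) * ∑ j, (q j : ℝ) * Real.log (x j) = 0 := by
    rw [Finset.mul_sum, ← key]; exact Finset.sum_congr rfl fun j _ => by ring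
  exact (mul_eq_zero.mp this).resolve_left hN'

/-- The mixed case is impossible: if `x^v` would be positive while `x^u = 0`. -/
lemma mixed_false {d m : ℕ} (A : Matrix (Fin d) (Fin m) ℕ)
    (x : Fin m → ℝ) (hx : ∀ j, 0 ≤ x j)
    (hX : ∀ u v : Fin m → ℕ, (∀ i, ∑ j, A i j * u j = ∑ j, A i j * v j) →
      ∏ j, x j ^ u j = ∏ j, x j ^ v j)
    (u v : Fin m → ℝ) (hu : ∀ j, 0 ≤ u j)
    (hv0 : ∀ j, x j = 0 → v j = 0)
    (huv : ∀ i, ∑ j, (A i j : ℝ) * u j = ∑ j, (A i j : ℝ) * v j)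
    (j0 : Fin m) (hj0 : x j0 = 0) (hj0u : 0 < u j0) : False := by
  classical
  set w : Fin m → ℝ := fun j => u j - v j with hwdef
  set M : (Fin d ⊕ Fin m) → Fin m → ℚ :=
    Sum.elim (fun i j => (A i j : ℚ))
      (fun j' j => if (x j' = 0 ∧ u j' = 0) ∧ j = j' then 1 else 0) with hM
  have hw : ∀ i, ∑ j, (M i j : ℝ) * w j = 0 := by
    rintro (i | j')
    · simp only [hM, Sum.elim_inl, hwdef]
      push_cast
      simp only [mul_sub]
      rw [Finset.sum_sub_distrib, sub_eq_zero]
      exact huv i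
    · simp only [hM, Sum.elim_inr]
      by_cases hP : x j' = 0 ∧ u j' = 0
      · rw [Finset.sum_eq_single j' (fun b _ hb => by simp [hb]) (by simp)]
        simp [hwdef, hP, hv0 j' hP.1]
      · apply Finset.sum_eq_zero
        intro j _
        simp [hP]
  obtain ⟨n, q, r, hker, hdecomp⟩ := rational_kernel_decomp M w hw
  have hkerA : ∀ t i, ∑ j, (A i j : ℚ) * q t j = 0 := fun t i => hker t (Sum.inl i)
  have hqz : ∀ t j', x j' = 0 → u j' = 0 → q t j' = 0 := by
    intro t j' h1 h2
    have h3 := hker t (Sum.inr j')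
    simp only [hM, Sum.elim_inr] at h3
    rw [Finset.sum_eq_single j' (fun b _ hb => by simp [hb]) (by simp)] at h3
    simpa [h1, h2] using h3
  -- approximation
  set S : Finset (Fin m) := Finset.univ.filter (fun j => x j = 0 ∧ 0 < u j) with hS
  have hj0S : j0 ∈ S := by simp [hS, hj0, hj0u]
  have hSne : S.Nonempty := ⟨j0, hj0S⟩
  set ε : ℝ := S.inf' hSne u with hε
  have hεpos : 0 < ε := by
    rw [hε, Finset.lt_inf'_iff]
    intro j hj
    exact ((Finset.mem_filter.mp hj).2).2
  set C : ℝ := ∑ t, ∑ j, |(q t j : ℝ)| with hC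
  have hC0 : 0 ≤ C := Finset.sum_nonneg fun t _ => Finset.sum_nonneg fun j _ => abs_nonneg _
  set δ : ℝ := ε / (C + 1) with hδ
  have hδpos : 0 < δ := div_pos hεpos (by linarith)
  have hsex : ∀ t, ∃ s : ℚ, |r t - s| < δ := fun t => exists_rat_near _ hδpos
  choose s hs using hsex
  set w' : Fin m → ℚ := fun j => ∑ t, s t * q t j with hw'
  have hcastw' : ∀ j, ((w' j : ℚ) : ℝ) = ∑ t, (s t : ℝ) * (q t j : ℝ) := by
    intro j
    simp only [hw']
    push_cast
    rfl
  have hbound : ∀ j, |(w' j : ℝ) - w j| ≤ δ * C := by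
    intro j
    rw [hcastw' j, hdecomp j, ← Finset.sum_sub_distrib]
    calc |∑ t, ((s t : ℝ) * q t j - r t * q t j)|
        ≤ ∑ t, |(s t : ℝ) * q t j - r t * q t j| := Finset.abs_sum_le_sum_abs _ _
      _ = ∑ t, |(s t : ℝ) - r t| * |(q t j : ℝ)| := by
          refine Finset.sum_congr rfl fun t _ => ?_
          rw [← abs_mul, sub_mul]
      _ ≤ ∑ t, δ * |(q t j : ℝ)| := by
          refine Finset.sum_le_sum fun t _ => ?_
          have h4 := hs t
          rw [abs_sub_comm] at h4
          exact mul_le_mul_of_nonneg_right h4.le (abs_nonneg _)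
      _ = δ * ∑ t, |(q t j : ℝ)| := (Finset.mul_sum _ _ _).symm
      _ ≤ δ * C := by
          refine mul_le_mul_of_nonneg_left ?_ hδpos.le
          rw [hC]
          refine Finset.sum_le_sum fun t _ => ?_
          exact Finset.single_le_sum (f := fun j' => |(q t j' : ℝ)|) (fun j' _ => abs_nonneg _) (Finset.mem_univ j)
  have hδC : δ * C < ε := by
    rw [hδ, div_mul_eq_mul_div, div_lt_iff₀ (by linarith : (0:ℝ) < C + 1)]
    nlinarith
  have hw'pos : ∀ j ∈ S, 0 < (w' j : ℝ) := by
    intro j hj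
    obtain ⟨hxj, huj⟩ := (Finset.mem_filter.mp hj).2
    have hwj : w j = u j := by simp [hwdef, hv0 j hxj]
    have hεle : ε ≤ u j := Finset.inf'_le _ hj
    have h5 := (abs_le.mp (hbound j)).1
    nlinarith
  have hw'z : ∀ j, x j = 0 → u j = 0 → w' j = 0 := by
    intro j h1 h2
    simp only [hw']
    exact Finset.sum_eq_zero fun t _ => by rw [hqz t j h1 h2, mul_zero]
  have hw'ker : ∀ i, ∑ j, (A i j : ℚ) * w' j = 0 := by
    intro i
    simp only [hw', Finset.mul_sum]
    rw [Finset.sum_comm]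
    apply Finset.sum_eq_zero
    intro t _
    calc ∑ j, (A i j : ℚ) * (s t * q t j) = s t * ∑ j, (A i j : ℚ) * q t j := by
          rw [Finset.mul_sum]; exact Finset.sum_congr rfl fun j _ => by ring
      _ = 0 := by rw [hkerA t i, mul_zero]
  -- integer witnesses
  obtain ⟨N, u', v', hN, hA', hsub, hupos, hzz, hvz⟩ := int_pair_of_rat A w' hw'ker
  have hprod := hX u' v' hA'
  have hq0pos : 0 < w' j0 := by
    have := hw'pos j0 hj0S
    exact_mod_cast this
  have hL : ∏ j, x j ^ u' j = 0 := by
    apply Finset.prod_eq_zero (Finset.mem_univ j0)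
    rw [hj0]
    exact zero_pow (hupos j0 hq0pos).ne'
  have hR : 0 < ∏ j, x j ^ v' j := by
    apply Finset.prod_pos
    intro j _
    rcases eq_or_lt_of_le (hx j) with h | h
    · have hv'0 : v' j = 0 := by
        apply hvz
        by_cases huj : u j = 0
        · rw [hw'z j h.symm huj]
        · have : j ∈ S := by
            simp only [hS, Finset.mem_filter, Finset.mem_univ, true_and]
            exact ⟨h.symm, lt_of_le_of_ne (hu j) (Ne.symm huj)⟩
          have := hw'pos j this
          have : (0:ℚ) < w' j := by exact_mod_cast this
          exact this.le
      rw [hv'0, pow_zero]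
      exact one_pos
    · exact pow_pos h _
  rw [hprod] at hL
  exact hR.ne' hL

/-- Lemma A.1: If `x ∈ ℝ_{≥0}^m` satisfies `x^u = x^v` for all nonnegative
integer vectors `u, v` with `A u = A v`, then `x^u = x^v` (real powers) holds for all
nonnegative real vectors `u, v` with `A u = A v`.  Hence `X_A = Z_A`. -/
theorem toric_variety_real_exponents {d m : ℕ} (A : Matrix (Fin d) (Fin m) ℕ)
    (x : Fin m → ℝ) (hx : ∀ j, 0 ≤ x j)
    (hX : ∀ u v : Fin m → ℕ, (∀ i, ∑ j, A i j * u j = ∑ j, A i j * v j) →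
      ∏ j, x j ^ u j = ∏ j, x j ^ v j) :
    ∀ u v : Fin m → ℝ, (∀ j, 0 ≤ u j) → (∀ j, 0 ≤ v j) →
      (∀ i, ∑ j, (A i j : ℝ) * u j = ∑ j, (A i j : ℝ) * v j) →
      ∏ j, x j ^ u j = ∏ j, x j ^ v j := by
  classical
  intro u v hu hv huv
  by_cases hzu : ∃ j, x j = 0 ∧ 0 < u j
  · by_cases hzv : ∃ j, x j = 0 ∧ 0 < v j
    · obtain ⟨j1, hj1, hj1'⟩ := hzu
      obtain ⟨j2, hj2, hj2'⟩ := hzv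
      rw [Finset.prod_eq_zero (Finset.mem_univ j1) (by rw [hj1]; exact Real.zero_rpow hj1'.ne'),
          Finset.prod_eq_zero (Finset.mem_univ j2) (by rw [hj2]; exact Real.zero_rpow hj2'.ne')]
    · push_neg at hzv
      have hv0 : ∀ j, x j = 0 → v j = 0 := fun j hj => le_antisymm (hzv j hj) (hv j)
      obtain ⟨j0, hj0, hj0u⟩ := hzu
      exact (mixed_false A x hx hX u v hu hv0 huv j0 hj0 hj0u).elim
  · push_neg at hzu
    have hu0 : ∀ j, x j = 0 → u j = 0 := fun j hj => le_antisymm (hzu j hj) (hu j)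
    by_cases hzv : ∃ j, x j = 0 ∧ 0 < v j
    · obtain ⟨j0, hj0, hj0v⟩ := hzv
      have huv' : ∀ i, ∑ j, (A i j : ℝ) * v j = ∑ j, (A i j : ℝ) * u j := fun i => (huv i).symm
      exact (mixed_false A x hx hX v u hv hu0 huv' j0 hj0 hj0v).elim
    · push_neg at hzv
      have hv0 : ∀ j, x j = 0 → v j = 0 := fun j hj => le_antisymm (hzv j hj) (hv j)
      set w : Fin m → ℝ := fun j => u j - v j with hwdef
      set M : (Fin d ⊕ Fin m) → Fin m → ℚ :=
        Sum.elim (fun i j => (A i j : ℚ)) (fun j' j => if x j' = 0 ∧ j = j' then 1 else 0) with hM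
      have hw : ∀ i, ∑ j, (M i j : ℝ) * w j = 0 := by
        rintro (i | j')
        · simp only [hM, Sum.elim_inl, hwdef]
          push_cast
          simp only [mul_sub]
          rw [Finset.sum_sub_distrib, sub_eq_zero]
          exact huv i
        · simp only [hM, Sum.elim_inr]
          by_cases hP : x j' = 0
          · rw [Finset.sum_eq_single j' (fun b _ hb => by simp [hb]) (by simp)]
            simp [hwdef, hP, hu0 j' hP, hv0 j' hP]
          · exact Finset.sum_eq_zero fun j _ => by simp [hP]
      obtain ⟨n, q, r, hker, hdecomp⟩ := rational_kernel_decomp M w hw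
      have hkerA : ∀ t i, ∑ j, (A i j : ℚ) * q t j = 0 := fun t i => hker t (Sum.inl i)
      have hqz : ∀ t j', x j' = 0 → q t j' = 0 := by
        intro t j' h1
        have h3 := hker t (Sum.inr j')
        simp only [hM, Sum.elim_inr] at h3
        rw [Finset.sum_eq_single j' (fun b _ hb => by simp [hb]) (by simp)] at h3
        simpa [h1] using h3
      have horth : ∀ t, ∑ j, (q t j : ℝ) * Real.log (x j) = 0 :=
        fun t => log_orth A x hx hX (q t) (hkerA t) (hqz t)
      have hworth : ∑ j, w j * Real.log (x j) = 0 := by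
        calc ∑ j, w j * Real.log (x j)
            = ∑ j, ∑ t, r t * ((q t j : ℝ) * Real.log (x j)) := by
              refine Finset.sum_congr rfl fun j _ => ?_
              rw [hdecomp j, Finset.sum_mul]
              exact Finset.sum_congr rfl fun t _ => by ring
          _ = ∑ t, r t * ∑ j, (q t j : ℝ) * Real.log (x j) := by
              rw [Finset.sum_comm]
              exact Finset.sum_congr rfl fun t _ => (Finset.mul_sum _ _ _).symm
          _ = 0 := Finset.sum_eq_zero fun t _ => by rw [horth t, mul_zero]
      rw [prod_rpow_eq_exp x hx u hu0, prod_rpow_eq_exp x hx v hv0, Real.exp_eq_exp,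
        ← sub_eq_zero, ← Finset.sum_sub_distrib, ← hworth]
      refine Finset.sum_congr rfl fun j _ => ?_
      simp only [hwdef]
      ring
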